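/- If a finite DAG G has a unique source s and a unique sink t and every vertex lies on a path from s to t, then the modified DFS started at s pops every vertex of G, and t is popped last with the stack empty thereafter. -/

import Mathlib

/-- In-degree of `u` in the directed graph given by adjacency `adj`. -/
def inDeg {V : Type*} [Fintype V] [DecidableEq V] (adj : V → V → Bool) (u : V) : ℕ :=
  (Finset.univ.filter (fun w => adj w u = true)).card

/-- State of the modified DFS: the stack, the counters δ, the list of popped
vertices in pop order, and the total number of push operations so far. -/
structure DFSState (V : Type*) where
  stack : List V
  count : V → ℕ
  popped : List V
  pushCount : ℕ

/-- Initial state: the start vertex `l0` is pushed, all counters are zero. -/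
def initState {V : Type*} (l0 : V) : DFSState V :=
  ⟨[l0], fun _ => 0, [], 1⟩

/-- One step of the modified DFS: pop the top vertex `v` of the stack,
increment δ(u) for each out-neighbor `u` of `v`, and push (in some order)
exactly those out-neighbors whose counter thereby reaches their in-degree. -/
inductive DFSStep {V : Type*} [Fintype V] [DecidableEq V] (adj : V → V → Bool) :
    DFSState V → DFSState V → Prop
  | pop (s : DFSState V) (v : V) (rest pushes : List V)
      (hstack : s.stack = v :: rest)
      (hperm : pushes.Perm ((Finset.univ.filter
        (fun u => adj v u = true ∧ s.count u + 1 = inDeg adj u)).toList)) :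
      DFSStep adj s
        { stack := pushes ++ rest
          count := fun u => if adj v u then s.count u + 1 else s.count u
          popped := s.popped ++ [v]
          pushCount := s.pushCount + pushes.length }

/-- Reachability between DFS states by zero or more steps. -/
def Reaches {V : Type*} [Fintype V] [DecidableEq V] (adj : V → V → Bool)
    (s s' : DFSState V) : Prop :=
  Relation.ReflTransGen (DFSStep adj) s s'

/-- Graph reachability along directed edges. -/
def Reach {V : Type*} (adj : V → V → Bool) : V → V → Prop :=
  Relation.ReflTransGen (fun a b => adj a b = true)

/-- The directed graph `adj` is acyclic. -/
def Acyclic {V : Type*} (adj : V → V → Bool) : Prop :=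
  ∀ v, ¬ Relation.TransGen (fun a b => adj a b = true) v v

section DFSAux

variable {V : Type*} [Fintype V] [DecidableEq V]

/-- The main invariant maintained by the modified DFS. -/
def DFSInv (adj : V → V → Bool) (t : V) (st : DFSState V) : Prop :=
  (st.popped ++ st.stack).Nodup ∧
  (∀ u, st.count u =
    (Finset.univ.filter (fun w => adj w u = true ∧ w ∈ st.popped)).card) ∧
  (∀ u, (u ∈ st.popped ∨ u ∈ st.stack) ↔ st.count u = inDeg adj u) ∧
  (t ∈ st.popped → st.stack = [] ∧ st.popped.getLast? = some t)

lemma popped_filter_subset (adj : V → V → Bool) (st : DFSState V) (u : V) :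
    (Finset.univ.filter (fun w => adj w u = true ∧ w ∈ st.popped)) ⊆
    (Finset.univ.filter (fun w => adj w u = true)) := by
  intro w hw
  simp only [Finset.mem_filter, Finset.mem_univ, true_and] at *
  exact hw.1

lemma allIn {adj : V → V → Bool} {t : V} {st : DFSState V}
    (hInv : DFSInv adj t st) {u : V} (hu : st.count u = inDeg adj u) :
    ∀ w, adj w u = true → w ∈ st.popped := by
  have h2 := hInv.2.1 u
  have hcard : (Finset.univ.filter (fun w => adj w u = true)).card ≤
      (Finset.univ.filter (fun w => adj w u = true ∧ w ∈ st.popped)).card := by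
    rw [← h2, hu]; exact le_of_eq rfl
  have heq := Finset.eq_of_subset_of_card_le (popped_filter_subset adj st u) hcard
  intro w hw
  have hmem : w ∈ Finset.univ.filter (fun w => adj w u = true ∧ w ∈ st.popped) := by
    rw [heq]; simp [hw]
  simp only [Finset.mem_filter] at hmem
  exact hmem.2.2

lemma count_lt {adj : V → V → Bool} {t : V} {st : DFSState V}
    (hInv : DFSInv adj t st) {u v : V} (hv : adj v u = true) (hvp : v ∉ st.popped) :
    st.count u < inDeg adj u := by
  rw [hInv.2.1 u]
  apply Finset.card_lt_card
  constructor
  · exact popped_filter_subset adj st u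
  · intro hsub
    have : v ∈ Finset.univ.filter (fun w => adj w u = true ∧ w ∈ st.popped) :=
      hsub (by simp [hv])
    simp only [Finset.mem_filter] at this
    exact hvp this.2.2

lemma ancestors_popped {adj : V → V → Bool} {t : V} {st : DFSState V}
    (hInv : DFSInv adj t st) {x : V} (hx : st.count x = inDeg adj x) :
    ∀ w, Relation.TransGen (fun a b => adj a b = true) w x → w ∈ st.popped := by
  intro w hw
  induction hw using Relation.TransGen.head_induction_on with
  | single h => exact allIn hInv hx _ h
  | head h' _ ihc =>
    exact allIn hInv ((hInv.2.2.1 _).mp (Or.inl ihc)) _ h'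

lemma inv_step {adj : V → V → Bool} (hacyc : Acyclic adj) {t : V}
    (hsinkt : ∀ u, adj t u = false)
    (htrans : ∀ v, v ≠ t → Relation.TransGen (fun a b => adj a b = true) v t)
    {st st' : DFSState V} (hInv : DFSInv adj t st) (hstep : DFSStep adj st st') :
    DFSInv adj t st' := by
  obtain ⟨v, rest, pushes, hstack, hperm⟩ := hstep
  obtain ⟨h1, h2, h3, h4⟩ := hInv
  have h1' := h1
  rw [hstack, List.nodup_append, List.nodup_cons] at h1'
  obtain ⟨hpopnd, ⟨hvrest, hrestnd⟩, hdisj⟩ := h1'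
  have hvpop : v ∉ st.popped := fun h => hdisj _ h _ List.mem_cons_self rfl
  have hvv : adj v v = false := by
    by_contra h
    rw [Bool.not_eq_false] at h
    exact hacyc v (Relation.TransGen.single h)
  have hvstack : v ∈ st.stack := by rw [hstack]; exact List.mem_cons_self
  have hcv : st.count v = inDeg adj v := (h3 v).mp (Or.inr hvstack)
  have hpushmem : ∀ u, u ∈ pushes ↔ (adj v u = true ∧ st.count u + 1 = inDeg adj u) := by
    intro u
    rw [hperm.mem_iff, Finset.mem_toList, Finset.mem_filter]
    simp
  have hpushnotold : ∀ u ∈ pushes, u ∉ st.popped ∧ u ∉ st.stack := by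
    intro u hu
    have h := (hpushmem u).mp hu
    have hne : st.count u ≠ inDeg adj u := by omega
    have := (h3 u).not.mpr hne
    push_neg at this
    exact this
  -- the new count formula
  have h2' : ∀ u, (if adj v u then st.count u + 1 else st.count u) =
      (Finset.univ.filter (fun w => adj w u = true ∧ w ∈ st.popped ++ [v])).card := by
    intro u
    by_cases h : adj v u = true
    · have hset : Finset.univ.filter (fun w => adj w u = true ∧ w ∈ st.popped ++ [v]) =
          insert v (Finset.univ.filter (fun w => adj w u = true ∧ w ∈ st.popped)) := by
        ext w
        simp only [Finset.mem_filter, Finset.mem_insert, Finset.mem_univ, true_and,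
          List.mem_append, List.mem_singleton]
        constructor
        · rintro ⟨hw, hw2 | rfl⟩
          · exact Or.inr ⟨hw, hw2⟩
          · exact Or.inl rfl
        · rintro (rfl | ⟨hw, hw2⟩)
          · exact ⟨h, Or.inr rfl⟩
          · exact ⟨hw, Or.inl hw2⟩
      have hvnot : v ∉ Finset.univ.filter (fun w => adj w u = true ∧ w ∈ st.popped) := by
        simp [hvpop]
      rw [if_pos h, hset, Finset.card_insert_of_notMem hvnot, h2 u]
    · have hset : Finset.univ.filter (fun w => adj w u = true ∧ w ∈ st.popped ++ [v]) =
          Finset.univ.filter (fun w => adj w u = true ∧ w ∈ st.popped) := by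
        ext w
        simp only [Finset.mem_filter, Finset.mem_univ, true_and, List.mem_append,
          List.mem_singleton]
        constructor
        · rintro ⟨hw, hw2 | rfl⟩
          · exact ⟨hw, hw2⟩
          · exact absurd hw h
        · rintro ⟨hw, hw2⟩
          exact ⟨hw, Or.inl hw2⟩
      rw [if_neg h, hset, h2 u]
  -- invariant 3 for the new state
  have h3' : ∀ u, (u ∈ st.popped ++ [v] ∨ u ∈ pushes ++ rest) ↔
      (if adj v u then st.count u + 1 else st.count u) = inDeg adj u := by
    intro u
    by_cases huv : u = v
    · subst huv
      rw [if_neg (by simp [hvv])]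
      simp only [List.mem_append, List.mem_singleton]
      constructor
      · intro _; exact hcv
      · intro _; exact Or.inl (Or.inr (by trivial))
    · by_cases h : adj v u = true
      · rw [if_pos h]
        have hlt : st.count u < inDeg adj u := count_lt ⟨h1, h2, h3, h4⟩ h hvpop
        have hnotold : u ∉ st.popped ∧ u ∉ st.stack := by
          have := (h3 u).not.mpr (by omega)
          push_neg at this
          exact this
        have hnotrest : u ∉ rest := fun hr => hnotold.2 (by rw [hstack]; exact List.mem_cons_of_mem _ hr)
        simp only [List.mem_append, List.mem_singleton]
        constructor
        · rintro ((hp | rfl) | (hp | hr))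
          · exact absurd hp hnotold.1
          · exact absurd rfl huv
          · exact ((hpushmem u).mp hp).2
          · exact absurd hr hnotrest
        · intro hc
          exact Or.inr (Or.inl ((hpushmem u).mpr ⟨h, hc⟩))
      · rw [if_neg h]
        have hnotpush : u ∉ pushes := fun hp => h ((hpushmem u).mp hp).1
        simp only [List.mem_append, List.mem_singleton]
        rw [← h3 u, hstack]
        simp only [List.mem_cons]
        constructor
        · rintro ((hp | rfl) | (hp | hr))
          · exact Or.inl hp
          · exact absurd rfl huv
          · exact absurd hp hnotpush
          · exact Or.inr (Or.inr hr)
        · rintro (hp | (rfl | hr))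
          · exact Or.inl (Or.inl hp)
          · exact absurd rfl huv
          · exact Or.inr (Or.inr hr)
  -- nodup for the new state
  have hpushnd : pushes.Nodup := hperm.nodup_iff.mpr (Finset.nodup_toList _)
  have h1'' : ((st.popped ++ [v]) ++ (pushes ++ rest)).Nodup := by
    rw [List.nodup_append, List.nodup_append, List.nodup_append]
    refine ⟨⟨hpopnd, List.nodup_singleton v, ?_⟩, ⟨hpushnd, hrestnd, ?_⟩, ?_⟩
    · rintro a ha _ hb rfl
      rw [List.mem_singleton] at hb
      subst hb
      exact hvpop ha
    · rintro a ha _ hb rfl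
      exact (hpushnotold a ha).2 (by rw [hstack]; exact List.mem_cons_of_mem _ hb)
    · rintro a ha _ hb rfl
      rw [List.mem_append, List.mem_singleton] at ha
      rw [List.mem_append] at hb
      rcases hb with hb | hb
      · rcases ha with ha | rfl
        · exact (hpushnotold a hb).1 ha
        · exact (hpushnotold a hb).2 hvstack
      · rcases ha with ha | rfl
        · exact hdisj _ ha _ (List.mem_cons_of_mem _ hb) rfl
        · exact hvrest hb
  -- invariant 4 for the new state
  have h4' : t ∈ st.popped ++ [v] →
      pushes ++ rest = [] ∧ (st.popped ++ [v]).getLast? = some t := by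
    intro ht
    rw [List.mem_append, List.mem_singleton] at ht
    rcases ht with ht | rfl
    · exact absurd ((h4 ht).1) (by rw [hstack]; simp)
    · have hpushes : pushes = [] := by
        rw [List.eq_nil_iff_forall_not_mem]
        intro u hu
        have := ((hpushmem u).mp hu).1
        rw [hsinkt u] at this
        exact absurd this (by simp)
      have hrest : rest = [] := by
        rw [List.eq_nil_iff_forall_not_mem]
        intro u hu
        have hut : u ≠ t := fun h => hvrest (h ▸ hu)
        have hupop : u ∈ st.popped :=
          ancestors_popped ⟨h1, h2, h3, h4⟩ hcv u (htrans u hut)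
        exact hdisj _ hupop _ (List.mem_cons_of_mem _ hu) rfl
      subst hpushes hrest
      exact ⟨rfl, List.getLast?_concat⟩
  exact ⟨h1'', h2', h3', h4'⟩

lemma inv_reaches {adj : V → V → Bool} (hacyc : Acyclic adj) {t : V}
    (hsinkt : ∀ u, adj t u = false)
    (htrans : ∀ v, v ≠ t → Relation.TransGen (fun a b => adj a b = true) v t)
    {st st' : DFSState V} (hInv : DFSInv adj t st) (hr : Reaches adj st st') :
    DFSInv adj t st' := by
  induction hr with
  | refl => exact hInv
  | tail _ hstep ih => exact inv_step hacyc hsinkt htrans ih hstep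

lemma dfs_progress {adj : V → V → Bool} (hacyc : Acyclic adj) {t : V}
    (hsinkt : ∀ u, adj t u = false)
    (htrans : ∀ v, v ≠ t → Relation.TransGen (fun a b => adj a b = true) v t) :
    ∀ (n : ℕ) (st : DFSState V), DFSInv adj t st →
      Fintype.card V - st.popped.length ≤ n →
      ∃ sf, Reaches adj st sf ∧ sf.stack = [] := by
  intro n
  induction n with
  | zero =>
    intro st hInv hle
    cases hst : st.stack with
    | nil => exact ⟨st, Relation.ReflTransGen.refl, hst⟩
    | cons v rest =>
      exfalso
      have hnd := hInv.1
      have hlen := hnd.length_le_card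
      rw [List.length_append, hst] at hlen
      simp only [List.length_cons] at hlen
      omega
  | succ n ih =>
    intro st hInv hle
    cases hst : st.stack with
    | nil => exact ⟨st, Relation.ReflTransGen.refl, hst⟩
    | cons v rest =>
      have hstep := DFSStep.pop (adj := adj) st v rest
        ((Finset.univ.filter
          (fun u => adj v u = true ∧ st.count u + 1 = inDeg adj u)).toList)
        hst (List.Perm.refl _)
      have hInv' := inv_step hacyc hsinkt htrans hInv hstep
      have hlen : Fintype.card V -
          (st.popped ++ [v]).length ≤ n := by
        have hnd := hInv'.1
        have := hnd.length_le_card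
        rw [List.length_append] at this ⊢
        simp only [List.length_singleton] at this ⊢
        omega
      obtain ⟨sf, hr, he⟩ := ih _ hInv' hlen
      exact ⟨sf, Relation.ReflTransGen.head hstep hr, he⟩

end DFSAux

/-- if a finite DAG has a unique source `s` and a unique sink
`t` and every vertex lies on a path from `s` to `t`, then the modified DFS
started at `s` terminates, pops every vertex, and pops `t` last. -/
theorem dfs_unique_source_sink {V : Type*} [Fintype V] [DecidableEq V]
    (adj : V → V → Bool) (hacyc : Acyclic adj) (s t : V)
    (hsource : ∀ v, (∀ u, adj u v = false) ↔ v = s)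
    (hsink : ∀ v, (∀ u, adj v u = false) ↔ v = t)
    (hpath : ∀ v, Reach adj s v ∧ Reach adj v t) :
    (∃ sf : DFSState V, Reaches adj (initState s) sf ∧ sf.stack = []) ∧
    (∀ sf : DFSState V, Reaches adj (initState s) sf → sf.stack = [] →
      (∀ v : V, v ∈ sf.popped) ∧ sf.popped.getLast? = some t) := by
  have hsinkt : ∀ u, adj t u = false := (hsink t).mpr rfl
  have hsources : ∀ u, adj u s = false := (hsource s).mpr rfl
  have htrans : ∀ v, v ≠ t → Relation.TransGen (fun a b => adj a b = true) v t := by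
    intro v hv
    rcases Relation.reflTransGen_iff_eq_or_transGen.mp ((hpath v).2) with h | h
    · exact absurd h.symm hv
    · exact h
  have hinit : DFSInv adj t (initState s) := by
    refine ⟨?_, ?_, ?_, ?_⟩
    · simp [initState]
    · intro u; simp [initState]
    · intro u
      simp only [initState, List.mem_singleton, List.not_mem_nil, false_or]
      constructor
      · intro hus
        have hfe : Finset.univ.filter (fun w => adj w s = true) = ∅ := by
          rw [Finset.filter_eq_empty_iff]
          intro w _
          simp [hsources w]
        rw [hus]
        simp [inDeg, hfe]
      · intro h
        by_contra hu
        have hne : ¬ ∀ w, adj w u = false := fun hall => hu ((hsource u).mp hall)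
        push_neg at hne
        obtain ⟨w, hw⟩ := hne
        simp only [Bool.not_eq_false] at hw
        have hpos : 0 < inDeg adj u := by
          rw [inDeg, Finset.card_pos]
          exact ⟨w, by simp [hw]⟩
        omega
    · intro h; simp [initState] at h
  constructor
  · obtain ⟨sf, hr, he⟩ :=
      dfs_progress hacyc hsinkt htrans (Fintype.card V) (initState s) hinit
        (by simp [initState])
    exact ⟨sf, hr, he⟩
  · intro sf hr hempty
    have hIsf : DFSInv adj t sf := inv_reaches hacyc hsinkt htrans hinit hr
    have hwf : WellFounded (fun a b : V => adj a b = true) := by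
      haveI h2 : IsIrrefl V (Relation.TransGen fun a b : V => adj a b = true) := ⟨hacyc⟩
      exact Subrelation.wf
        (q := fun a b : V => adj a b = true)
        (r := Relation.TransGen fun a b : V => adj a b = true)
        (fun h => Relation.TransGen.single h)
        (Finite.wellFounded_of_trans_of_irrefl _)
    have hall : ∀ v, v ∈ sf.popped := by
      intro v
      induction v using hwf.induction with
      | _ v ih =>
        have hcv : sf.count v = inDeg adj v := by
          rw [hIsf.2.1 v, inDeg]
          congr 1
          ext w
          simp only [Finset.mem_filter, Finset.mem_univ, true_and]
          exact ⟨fun h => h.1, fun h => ⟨h, ih w h⟩⟩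
        rcases (hIsf.2.2.1 v).mpr hcv with h | h
        · exact h
        · rw [hempty] at h; simp at h
    exact ⟨hall, (hIsf.2.2.2 (hall t)).2⟩
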